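/- Let T > 0, H > 0 and δ ∈ (0, 2). For ε > 0 and n ≥ 1 define c_n(ε) = ∫₀¹ √2·sin(nπx)·(H/ε)·exp(H(x−1)/ε) dx. Then there exist C > 0 and ε₀ > 0 such that for all ε with 0 < ε ≤ ε₀: ∑_{n=1}^{∞} c_n(ε)²·exp(−2n²π²T) ≤ C·ε^{2−δ}. -/

import Mathlib

open Real intervalIntegral

lemma bld_coeff_bound (H ε : ℝ) (hH : 0 < H) (hε : 0 < ε) (n : ℕ) :
    |∫ x in (0:ℝ)..1, Real.sqrt 2 * Real.sin ((n : ℝ) * Real.pi * x) *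
        ((H / ε) * Real.exp (H * (x - 1) / ε))|
      ≤ Real.sqrt 2 * n * Real.pi * (ε / H) := by
  set a : ℝ := H / ε with ha
  have hapos : 0 < a := div_pos hH hε
  have harg : ∀ x : ℝ, H * (x - 1) / ε = a * (x - 1) := fun x => by rw [ha]; ring
  have h1a : 1 / a = ε / H := by rw [ha]; field_simp
  simp only [harg]
  clear_value a
  set f : ℝ → ℝ := fun x => Real.sqrt 2 * Real.sin ((n : ℝ) * Real.pi * x) *
      (a * Real.exp (a * (x - 1))) with hf
  set g : ℝ → ℝ := fun x => Real.sqrt 2 * n * Real.pi *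
      (a * (1 - x) * Real.exp (a * (x - 1))) with hg
  have hfc : Continuous f := by fun_prop
  have hgc : Continuous g := by fun_prop
  have hsqrt2 : (0:ℝ) ≤ Real.sqrt 2 := Real.sqrt_nonneg 2
  have hpt : ∀ x ∈ Set.Icc (0:ℝ) 1, |f x| ≤ g x := by
    intro x hx
    obtain ⟨hx0, hx1⟩ := hx
    have hE : 0 < Real.exp (a * (x - 1)) := Real.exp_pos _
    have hsin : |Real.sin ((n : ℝ) * Real.pi * x)| ≤ (n : ℝ) * Real.pi * (1 - x) := by
      have h1 : (n : ℝ) * Real.pi * x = (n : ℝ) * Real.pi - (n : ℝ) * Real.pi * (1 - x) := by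
        ring
      rw [h1, Real.sin_nat_mul_pi_sub, abs_neg, abs_mul]
      have h2 : |((-1:ℝ)) ^ n| = 1 := by
        rw [abs_pow, abs_neg, abs_one, one_pow]
      rw [h2, one_mul]
      calc |Real.sin ((n : ℝ) * Real.pi * (1 - x))| ≤ |(n : ℝ) * Real.pi * (1 - x)| :=
            Real.abs_sin_le_abs
        _ = (n : ℝ) * Real.pi * (1 - x) := by
            rw [abs_of_nonneg]
            have h1x : (0:ℝ) ≤ 1 - x := by linarith
            exact mul_nonneg (mul_nonneg (Nat.cast_nonneg n) Real.pi_pos.le) h1x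
    have : |f x| = Real.sqrt 2 * |Real.sin ((n : ℝ) * Real.pi * x)| *
        (a * Real.exp (a * (x - 1))) := by
      rw [hf]
      rw [abs_mul, abs_mul, abs_of_nonneg hsqrt2, abs_of_nonneg (by positivity : (0:ℝ) ≤ a * Real.exp (a * (x-1)))]
    rw [this, hg]
    have hbase : Real.sqrt 2 * |Real.sin ((n : ℝ) * Real.pi * x)| *
        (a * Real.exp (a * (x - 1)))
        ≤ Real.sqrt 2 * ((n : ℝ) * Real.pi * (1 - x)) * (a * Real.exp (a * (x - 1))) := by
      apply mul_le_mul_of_nonneg_right _ (by positivity)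
      exact mul_le_mul_of_nonneg_left hsin hsqrt2
    calc Real.sqrt 2 * |Real.sin ((n : ℝ) * Real.pi * x)| * (a * Real.exp (a * (x - 1)))
        ≤ Real.sqrt 2 * ((n : ℝ) * Real.pi * (1 - x)) * (a * Real.exp (a * (x - 1))) := hbase
      _ = Real.sqrt 2 * n * Real.pi * (a * (1 - x) * Real.exp (a * (x - 1))) := by ring
  have h1 : |∫ x in (0:ℝ)..1, f x| ≤ ∫ x in (0:ℝ)..1, |f x| :=
    intervalIntegral.abs_integral_le_integral_abs zero_le_one
  have h2 : (∫ x in (0:ℝ)..1, |f x|) ≤ ∫ x in (0:ℝ)..1, g x := by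
    apply intervalIntegral.integral_mono_on zero_le_one
    · exact (hfc.abs).intervalIntegrable 0 1
    · exact hgc.intervalIntegrable 0 1
    · exact hpt
  -- compute ∫ g
  have hI : (∫ x in (0:ℝ)..1, a * (1 - x) * Real.exp (a * (x - 1)))
      = 1 / a - (1 + 1 / a) * Real.exp (-a) := by
    have hderiv : ∀ x ∈ Set.uIcc (0:ℝ) 1,
        HasDerivAt (fun y => ((1 - y) + 1 / a) * Real.exp (a * (y - 1)))
          (a * (1 - x) * Real.exp (a * (x - 1))) x := by
      intro x _
      have hu : HasDerivAt (fun y : ℝ => (1 - y) + 1 / a) (-1) x := by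
        have : HasDerivAt (fun y : ℝ => 1 - y) (-1) x := by
          simpa using (hasDerivAt_id' x).const_sub (1:ℝ)
        simpa using this.add_const (1 / a)
      have hv : HasDerivAt (fun y : ℝ => Real.exp (a * (y - 1)))
          (Real.exp (a * (x - 1)) * a) x := by
        have h3 : HasDerivAt (fun y : ℝ => a * (y - 1)) a x := by
          simpa using ((hasDerivAt_id x).sub_const (1:ℝ)).const_mul a
        simpa using h3.exp
      have : HasDerivAt (fun y => ((1 - y) + 1 / a) * Real.exp (a * (y - 1))) _ x := hu.mul hv
      convert this using 1
      have ha0 : a ≠ 0 := hapos.ne'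
      linear_combination (-(Real.exp (a * (x - 1)))) * (one_div_mul_cancel ha0)
    have hcont : IntervalIntegrable (fun x => a * (1 - x) * Real.exp (a * (x - 1)))
        MeasureTheory.volume 0 1 := by
      apply Continuous.intervalIntegrable; fun_prop
    rw [intervalIntegral.integral_eq_sub_of_hasDerivAt hderiv hcont]
    simp
  have hIg : (∫ x in (0:ℝ)..1, g x)
      = Real.sqrt 2 * n * Real.pi * (1 / a - (1 + 1 / a) * Real.exp (-a)) := by
    rw [hg]
    rw [intervalIntegral.integral_const_mul, hI]
  have hIle : (1 : ℝ) / a - (1 + 1 / a) * Real.exp (-a) ≤ 1 / a := by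
    have : 0 ≤ (1 + 1 / a) * Real.exp (-a) := by positivity
    linarith
  calc |∫ x in (0:ℝ)..1, f x| ≤ ∫ x in (0:ℝ)..1, g x := h1.trans h2
    _ = Real.sqrt 2 * n * Real.pi * (1 / a - (1 + 1 / a) * Real.exp (-a)) := hIg
    _ ≤ Real.sqrt 2 * n * Real.pi * (1 / a) := by
        apply mul_le_mul_of_nonneg_left hIle
        have := Real.pi_pos
        positivity
    _ = Real.sqrt 2 * n * Real.pi * (ε / H) := by rw [h1a]

/-- Dissipation of the boundary layer by the heat equation: with
`c_n(ε) = ∫₀¹ √2 sin(nπx)·(H/ε)e^{H(x−1)/ε} dx` the Fourier coefficients of the boundary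
residue in the Dirichlet basis, for every `T > 0` and `δ ∈ (0,2)` there are `C > 0` and
`ε₀ > 0` such that for `0 < ε ≤ ε₀`,
`∑_{n≥1} c_n(ε)² e^{−2n²π²T} ≤ C·ε^{2−δ}`. -/
theorem boundary_layer_dissipation (T H δ : ℝ) (hT : 0 < T) (hH : 0 < H)
    (hδ : δ ∈ Set.Ioo (0 : ℝ) 2)
    (c : ℝ → ℕ → ℝ)
    (hc : ∀ ε : ℝ, ∀ n : ℕ, c ε n =
      ∫ x in (0 : ℝ)..1,
        Real.sqrt 2 * Real.sin ((n : ℝ) * Real.pi * x) *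
          ((H / ε) * Real.exp (H * (x - 1) / ε))) :
    ∃ C > 0, ∃ ε₀ > 0, ∀ ε : ℝ, 0 < ε → ε ≤ ε₀ →
      (∑' n : ℕ, (c ε (n + 1)) ^ 2 *
          Real.exp (-2 * ((n : ℝ) + 1) ^ 2 * Real.pi ^ 2 * T))
        ≤ C * ε ^ (2 - δ) := by
  have hπ := Real.pi_pos
  set e : ℕ → ℝ := fun n => Real.exp (-2 * ((n : ℝ) + 1) ^ 2 * Real.pi ^ 2 * T) with he
  -- summability of the majorant
  have hS : Summable (fun n : ℕ => ((n : ℝ) + 1) ^ 2 * e n) := by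
    set r : ℝ := Real.exp (-(2 * Real.pi ^ 2 * T)) with hr
    have hr1 : ‖r‖ < 1 := by
      rw [Real.norm_eq_abs, abs_of_pos (Real.exp_pos _)]
      apply Real.exp_lt_one_iff.2
      have : 0 < 2 * Real.pi ^ 2 * T := by positivity
      linarith
    have hmaj : Summable (fun n : ℕ => ((n : ℝ) + 1) ^ 2 * r ^ (n + 1)) := by
      have h0 : Summable (fun n : ℕ => (n : ℝ) ^ 2 * r ^ n) :=
        summable_pow_mul_geometric_of_norm_lt_one 2 hr1
      have h1 := (summable_nat_add_iff 1).2 h0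
      refine h1.congr fun n => ?_
      push_cast
      ring
    apply Summable.of_nonneg_of_le (fun n => by positivity) _ hmaj
    intro n
    apply mul_le_mul_of_nonneg_left _ (by positivity)
    rw [hr, ← Real.exp_nat_mul, he]
    apply Real.exp_le_exp.2
    push_cast
    nlinarith [mul_pos (pow_pos hπ 2) hT, Nat.cast_nonneg (α := ℝ) n, sq_nonneg ((n : ℝ))]
  set S : ℝ := ∑' n : ℕ, ((n : ℝ) + 1) ^ 2 * e n with hSdef
  have hS0 : 0 ≤ S := tsum_nonneg fun n => by positivity
  refine ⟨2 * Real.pi ^ 2 / H ^ 2 * S + 1, by positivity, 1, one_pos, ?_⟩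
  intro ε hε hε1
  -- termwise bound
  have hterm : ∀ n : ℕ, (c ε (n + 1)) ^ 2 * e n
      ≤ (2 * Real.pi ^ 2 * (ε / H) ^ 2) * (((n : ℝ) + 1) ^ 2 * e n) := by
    intro n
    have hb := bld_coeff_bound H ε hH hε (n + 1)
    rw [← hc ε (n + 1)] at hb
    have hsq : (c ε (n + 1)) ^ 2 ≤ (Real.sqrt 2 * ((n : ℕ) + 1 : ℕ) * Real.pi * (ε / H)) ^ 2 := by
      have := sq_le_sq' (neg_le_of_abs_le hb |>.trans_eq rfl |> fun h => h) (le_of_abs_le hb)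
      exact this
    have hcast : ((n + 1 : ℕ) : ℝ) = (n : ℝ) + 1 := by push_cast; ring
    have hsq2 : (Real.sqrt 2 * ((n + 1 : ℕ) : ℝ) * Real.pi * (ε / H)) ^ 2
        = 2 * Real.pi ^ 2 * (ε / H) ^ 2 * ((n : ℝ) + 1) ^ 2 := by
      rw [hcast]
      have : Real.sqrt 2 ^ 2 = 2 := Real.sq_sqrt (by norm_num)
      nlinarith [this]
    have he0 : 0 ≤ e n := (Real.exp_pos _).le
    calc (c ε (n + 1)) ^ 2 * e n
        ≤ (Real.sqrt 2 * ((n + 1 : ℕ) : ℝ) * Real.pi * (ε / H)) ^ 2 * e n := by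
          apply mul_le_mul_of_nonneg_right _ he0
          exact hsq
      _ = (2 * Real.pi ^ 2 * (ε / H) ^ 2) * (((n : ℝ) + 1) ^ 2 * e n) := by
          rw [hsq2]; ring
  have hsumR : Summable (fun n : ℕ => (2 * Real.pi ^ 2 * (ε / H) ^ 2) * (((n : ℝ) + 1) ^ 2 * e n)) :=
    hS.mul_left _
  have hsumL : Summable (fun n : ℕ => (c ε (n + 1)) ^ 2 * e n) :=
    Summable.of_nonneg_of_le (fun n => by positivity) hterm hsumR
  have h1 : (∑' n : ℕ, (c ε (n + 1)) ^ 2 * e n)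
      ≤ ∑' n : ℕ, (2 * Real.pi ^ 2 * (ε / H) ^ 2) * (((n : ℝ) + 1) ^ 2 * e n) :=
    Summable.tsum_le_tsum hterm hsumL hsumR
  rw [tsum_mul_left] at h1
  have h2 : 2 * Real.pi ^ 2 * (ε / H) ^ 2 * S ≤ (2 * Real.pi ^ 2 / H ^ 2 * S + 1) * ε ^ (2 - δ) := by
    have hεpow : ε ^ (2 : ℕ) ≤ ε ^ (2 - δ) := by
      have : ε ^ ((2 : ℝ)) ≤ ε ^ (2 - δ) :=
        Real.rpow_le_rpow_of_exponent_ge hε hε1 (by linarith [hδ.1])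
      calc ε ^ (2 : ℕ) = ε ^ ((2 : ℝ)) := by
            rw [← Real.rpow_natCast ε 2]; norm_num
        _ ≤ ε ^ (2 - δ) := this
    have hd : 2 * Real.pi ^ 2 * (ε / H) ^ 2 * S = (2 * Real.pi ^ 2 / H ^ 2 * S) * ε ^ (2 : ℕ) := by
      field_simp
    rw [hd]
    have hpow0 : 0 ≤ ε ^ (2 - δ) := Real.rpow_nonneg hε.le _
    have hc0 : 0 ≤ 2 * Real.pi ^ 2 / H ^ 2 * S := by positivity
    nlinarith [mul_le_mul_of_nonneg_left hεpow hc0]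
  exact h1.trans h2
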